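/- Let n ∈ ℕ, let q : ℕ → ℍ with q n ≠ 0 and with constant coefficient q 0 = 0 or q 0 = 1, and let p(x) = ∑_{m=0}^{n} (q m)·x^m with derived polynomials f₁, f₂ ∈ ℂ[t]. Then the zero set {x ∈ ℍ | p(x) = 0} is finite if and only if there is no nonreal complex number z with f₁(z) = f₂(z) = 0 and f₁(conj z) = f₂(conj z) = 0 (equivalently, the greatest common divisor of f₁, f₂, f̄₁, f̄₂ has no nonreal complex root). -/

import Mathlib

noncomputable section

/-- The quaternion `a + b·i` corresponding to the complex number `z = a + b·I`. -/
def cq (z : ℂ) : Quaternion ℝ := ⟨z.re, z.im, 0, 0⟩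

/-- The quaternion imaginary unit `k`. -/
def qk : Quaternion ℝ := ⟨0, 0, 0, 1⟩

/-- Evaluation of the first derived polynomial `f₁(t) = ∑ t₁⁽ᵐ⁾ tᵐ`,
where `q m = t₁⁽ᵐ⁾ + t₂⁽ᵐ⁾·j` and `t₁⁽ᵐ⁾ = (q m).re + (q m).imI·I`. -/
def f1 (n : ℕ) (q : ℕ → Quaternion ℝ) (z : ℂ) : ℂ :=
  ∑ m ∈ Finset.range (n + 1), (⟨(q m).re, (q m).imI⟩ : ℂ) * z ^ m

/-- Evaluation of the second derived polynomial `f₂(t) = ∑ t₂⁽ᵐ⁾ tᵐ`,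
where `t₂⁽ᵐ⁾ = (q m).imJ + (q m).imK·I`. -/
def f2 (n : ℕ) (q : ℕ → Quaternion ℝ) (z : ℂ) : ℂ :=
  ∑ m ∈ Finset.range (n + 1), (⟨(q m).imJ, (q m).imK⟩ : ℂ) * z ^ m

/-- Evaluation of `f̄₁`, obtained from `f₁` by conjugating each coefficient. -/
def f1b (n : ℕ) (q : ℕ → Quaternion ℝ) (z : ℂ) : ℂ :=
  ∑ m ∈ Finset.range (n + 1), (starRingEnd ℂ) (⟨(q m).re, (q m).imI⟩ : ℂ) * z ^ m

/-- Evaluation of `f̄₂`, obtained from `f₂` by conjugating each coefficient. -/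
def f2b (n : ℕ) (q : ℕ → Quaternion ℝ) (z : ℂ) : ℂ :=
  ∑ m ∈ Finset.range (n + 1), (starRingEnd ℂ) (⟨(q m).imJ, (q m).imK⟩ : ℂ) * z ^ m

/-- Evaluation of the discriminant polynomial `p̃ = f₁·f̄₁ + f₂·f̄₂`. -/
def ptilde (n : ℕ) (q : ℕ → Quaternion ℝ) (z : ℂ) : ℂ :=
  f1 n q z * f1b n q z + f2 n q z * f2b n q z

open scoped Quaternion

/-! ### Auxiliary machinery -/

/-- The quaternion imaginary unit `j`. -/
def qj : Quaternion ℝ := ⟨0, 0, 1, 0⟩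

@[simp] lemma cq_re (z : ℂ) : (cq z).re = z.re := rfl
@[simp] lemma cq_imI (z : ℂ) : (cq z).imI = z.im := rfl
@[simp] lemma cq_imJ (z : ℂ) : (cq z).imJ = 0 := rfl
@[simp] lemma cq_imK (z : ℂ) : (cq z).imK = 0 := rfl
@[simp] lemma qj_re : qj.re = 0 := rfl
@[simp] lemma qj_imI : qj.imI = 0 := rfl
@[simp] lemma qj_imJ : qj.imJ = 1 := rfl
@[simp] lemma qj_imK : qj.imK = 0 := rfl

def T1 (a : Quaternion ℝ) : ℂ := ⟨a.re, a.imI⟩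
def T2 (a : Quaternion ℝ) : ℂ := ⟨a.imJ, a.imK⟩

lemma cq_mul (a b : ℂ) : cq (a * b) = cq a * cq b := by
  ext <;> simp [Quaternion.re_mul, Quaternion.imI_mul, Quaternion.imJ_mul, Quaternion.imK_mul]

lemma cq_add (a b : ℂ) : cq (a + b) = cq a + cq b := by
  ext <;> simp

lemma cq_zero : cq 0 = 0 := by ext <;> simp [cq]
lemma cq_one : cq 1 = 1 := by ext <;> simp [cq]

lemma cq_pow (a : ℂ) (m : ℕ) : cq (a ^ m) = (cq a) ^ m := by
  induction m with
  | zero => simpa using cq_one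
  | succ m ih => rw [pow_succ, pow_succ, cq_mul, ih]

lemma cq_inj {a b : ℂ} (h : cq a = cq b) : a = b := by
  have h1 := congrArg QuaternionAlgebra.re h
  have h2 := congrArg QuaternionAlgebra.imI h
  simp [cq] at h1 h2
  exact Complex.ext h1 h2

lemma cq_ofReal (r : ℝ) : cq (r : ℂ) = (r : Quaternion ℝ) := by
  ext <;> simp [cq]

lemma cq_sum {s : Finset ℕ} {f : ℕ → ℂ} : cq (∑ m ∈ s, f m) = ∑ m ∈ s, cq (f m) := by
  classical
  induction s using Finset.induction with
  | empty => simpa using cq_zero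
  | insert _ _ h ih => simp [Finset.sum_insert h, cq_add, ih]

/-- Decomposition of left multiplication by a quaternion on a complex quaternion. -/
lemma mul_cq (a : Quaternion ℝ) (v : ℂ) :
    a * cq v = cq (T1 a * v) + cq (T2 a * (starRingEnd ℂ) v) * qj := by
  ext <;> simp [T1, T2, Quaternion.re_mul, Quaternion.imI_mul, Quaternion.imJ_mul,
    Quaternion.imK_mul]

/-- Sphere coefficients: `x ^ m = (ab s r m).1 + (ab s r m).2 • x` whenever
`x ^ 2 = s • x - r`. -/
def ab (s r : ℝ) : ℕ → ℝ × ℝ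
  | 0 => (1, 0)
  | m + 1 => (-r * (ab s r m).2, (ab s r m).1 + s * (ab s r m).2)

lemma pow_ab {A : Type*} [Ring A] [Algebra ℝ A] (s r : ℝ) (x : A)
    (hx : x ^ 2 = s • x - algebraMap ℝ A r) (m : ℕ) :
    x ^ m = algebraMap ℝ A (ab s r m).1 + (ab s r m).2 • x := by
  induction m with
  | zero => simp [ab]
  | succ m ih =>
    rw [pow_succ, ih, add_mul, smul_mul_assoc, ← pow_two, hx, ab]
    rw [Algebra.algebraMap_eq_smul_one]
    rw [Algebra.algebraMap_eq_smul_one]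
    rw [Algebra.algebraMap_eq_smul_one]
    rw [smul_mul_assoc, one_mul]
    rw [smul_sub, smul_smul, smul_smul]
    module

lemma quat_sq (x : Quaternion ℝ) :
    x ^ 2 = (2 * x.re) • x - algebraMap ℝ (Quaternion ℝ)
      (x.re ^ 2 + x.imI ^ 2 + x.imJ ^ 2 + x.imK ^ 2) := by
  ext <;> simp [pow_two, Quaternion.re_mul, Quaternion.imI_mul, Quaternion.imJ_mul,
    Quaternion.imK_mul] <;> ring

lemma cq_sq (z : ℂ) :
    (cq z) ^ 2 = (2 * z.re) • cq z - algebraMap ℝ (Quaternion ℝ) (z.re ^ 2 + z.im ^ 2) := by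
  have h := quat_sq (cq z)
  simpa [cq] using h

/-- Decomposition of the polynomial on a sphere: `p(x) = A + B * x`. -/
lemma P_eq (n : ℕ) (q : ℕ → Quaternion ℝ) (s r : ℝ) (x : Quaternion ℝ)
    (hx : x ^ 2 = s • x - algebraMap ℝ (Quaternion ℝ) r) :
    ∑ m ∈ Finset.range (n + 1), q m * x ^ m =
      (∑ m ∈ Finset.range (n + 1), (ab s r m).1 • q m) +
      (∑ m ∈ Finset.range (n + 1), (ab s r m).2 • q m) * x := by
  rw [Finset.sum_mul, ← Finset.sum_add_distrib]
  refine Finset.sum_congr rfl fun m _ => ?_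
  rw [pow_ab s r x hx, mul_add, Algebra.algebraMap_eq_smul_one, mul_smul_comm, mul_one,
    mul_smul_comm, smul_mul_assoc]

/-- Decomposition of the companion double sum on a sphere. -/
lemma T_eq (n : ℕ) (q : ℕ → Quaternion ℝ) (s r : ℝ) (x : Quaternion ℝ)
    (hx : x ^ 2 = s • x - algebraMap ℝ (Quaternion ℝ) r) :
    ∑ a ∈ Finset.range (n + 1), ∑ b ∈ Finset.range (n + 1), star (q a) * q b * x ^ (a + b) =
      (∑ a ∈ Finset.range (n + 1), ∑ b ∈ Finset.range (n + 1),
        (ab s r (a + b)).1 • (star (q a) * q b)) +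
      (∑ a ∈ Finset.range (n + 1), ∑ b ∈ Finset.range (n + 1),
        (ab s r (a + b)).2 • (star (q a) * q b)) * x := by
  rw [Finset.sum_mul, ← Finset.sum_add_distrib]
  refine Finset.sum_congr rfl fun a _ => ?_
  rw [Finset.sum_mul, ← Finset.sum_add_distrib]
  refine Finset.sum_congr rfl fun b _ => ?_
  rw [pow_ab s r x hx, mul_add, Algebra.algebraMap_eq_smul_one, mul_smul_comm, mul_one,
    mul_smul_comm, smul_mul_assoc]

/-- The companion double sum factors through the polynomial. -/
lemma T_factor (n : ℕ) (q : ℕ → Quaternion ℝ) (x : Quaternion ℝ) :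
    ∑ a ∈ Finset.range (n + 1), ∑ b ∈ Finset.range (n + 1), star (q a) * q b * x ^ (a + b) =
      ∑ a ∈ Finset.range (n + 1),
        star (q a) * (∑ b ∈ Finset.range (n + 1), q b * x ^ b) * x ^ a := by
  refine Finset.sum_congr rfl fun a _ => ?_
  rw [Finset.mul_sum, Finset.sum_mul]
  refine Finset.sum_congr rfl fun b _ => ?_
  rw [pow_add, pow_mul_comm, ← mul_assoc, mul_assoc (star (q a))]

lemma star_rsmul (r : ℝ) (y : Quaternion ℝ) : star (r • y) = r • star y := by
  ext <;> simp

lemma real_of_star_eq (y : Quaternion ℝ) (h : star y = y) : y = ((y.re : ℝ) : Quaternion ℝ) := by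
  have h1 := congrArg QuaternionAlgebra.imI h
  have h2 := congrArg QuaternionAlgebra.imJ h
  have h3 := congrArg QuaternionAlgebra.imK h
  simp at h1 h2 h3
  ext <;> simp <;> linarith

lemma star_U (n : ℕ) (q : ℕ → Quaternion ℝ) (c : ℕ → ℝ) :
    star (∑ a ∈ Finset.range (n + 1), ∑ b ∈ Finset.range (n + 1),
        c (a + b) • (star (q a) * q b)) =
      ∑ a ∈ Finset.range (n + 1), ∑ b ∈ Finset.range (n + 1),
        c (a + b) • (star (q a) * q b) := by
  rw [star_sum, Finset.sum_comm]
  refine Finset.sum_congr rfl fun a _ => ?_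
  rw [star_sum]
  refine Finset.sum_congr rfl fun b _ => ?_
  rw [star_rsmul, star_mul, star_star, add_comm]

/-- Pairwise symmetrized identity underlying `p̄·p = p̃`. -/
lemma pair_id (a b : Quaternion ℝ) (w : ℂ) :
    star a * b * cq w + star b * a * cq w =
      cq (((starRingEnd ℂ) (T1 a) * T1 b + T2 a * (starRingEnd ℂ) (T2 b)) * w) +
      cq (((starRingEnd ℂ) (T1 b) * T1 a + T2 b * (starRingEnd ℂ) (T2 a)) * w) := by
  ext <;>
    simp [T1, T2, Quaternion.re_mul, Quaternion.imI_mul, Quaternion.imJ_mul,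
      Quaternion.imK_mul, Complex.mul_re, Complex.mul_im] <;> ring

/-- `p̃` as a double sum. -/
lemma ptilde_double (n : ℕ) (q : ℕ → Quaternion ℝ) (z : ℂ) :
    ptilde n q z = ∑ a ∈ Finset.range (n + 1), ∑ b ∈ Finset.range (n + 1),
      ((starRingEnd ℂ) (T1 (q a)) * T1 (q b) + T2 (q a) * (starRingEnd ℂ) (T2 (q b))) *
        z ^ (a + b) := by
  have h1 : f1 n q z * f1b n q z = ∑ a ∈ Finset.range (n+1), ∑ b ∈ Finset.range (n+1),
      ((starRingEnd ℂ) (T1 (q a)) * T1 (q b)) * z ^ (a + b) := by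
    rw [mul_comm, f1, f1b, Finset.sum_mul_sum]
    refine Finset.sum_congr rfl fun a _ => Finset.sum_congr rfl fun b _ => ?_
    rw [pow_add]; unfold T1; ring
  have h2 : f2 n q z * f2b n q z = ∑ a ∈ Finset.range (n+1), ∑ b ∈ Finset.range (n+1),
      (T2 (q a) * (starRingEnd ℂ) (T2 (q b))) * z ^ (a + b) := by
    rw [f2, f2b, Finset.sum_mul_sum]
    refine Finset.sum_congr rfl fun a _ => Finset.sum_congr rfl fun b _ => ?_
    rw [pow_add]; unfold T2; ring
  rw [ptilde, h1, h2, ← Finset.sum_add_distrib]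
  refine Finset.sum_congr rfl fun a _ => ?_
  rw [← Finset.sum_add_distrib]
  refine Finset.sum_congr rfl fun b _ => ?_
  ring

lemma double_sum_antisym (n : ℕ) (F : ℕ → ℕ → Quaternion ℝ)
    (hF : ∀ a b, F a b + F b a = 0) :
    ∑ a ∈ Finset.range (n + 1), ∑ b ∈ Finset.range (n + 1), F a b = 0 := by
  have h := Finset.sum_comm (s := Finset.range (n+1)) (t := Finset.range (n+1))
    (f := fun a b => F a b)
  have h2 : (∑ a ∈ Finset.range (n+1), ∑ b ∈ Finset.range (n+1), F a b) +
      (∑ a ∈ Finset.range (n+1), ∑ b ∈ Finset.range (n+1), F a b) = 0 := by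
    nth_rewrite 2 [h]
    rw [← Finset.sum_add_distrib]
    refine Finset.sum_eq_zero fun a _ => ?_
    rw [← Finset.sum_add_distrib]
    exact Finset.sum_eq_zero fun b _ => hF a b
  have h3 : (2 : ℝ) • (∑ a ∈ Finset.range (n+1), ∑ b ∈ Finset.range (n+1), F a b) = 0 := by
    rw [two_smul]; exact h2
  rcases smul_eq_zero.mp h3 with h | h
  · norm_num at h
  · exact h

/-- The companion identity: the double sum at `cq z` equals `cq (p̃ z)`. -/
lemma T_cq (n : ℕ) (q : ℕ → Quaternion ℝ) (z : ℂ) :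
    ∑ a ∈ Finset.range (n + 1), ∑ b ∈ Finset.range (n + 1),
        star (q a) * q b * (cq z) ^ (a + b) =
      cq (ptilde n q z) := by
  rw [← sub_eq_zero]
  have hptilde : cq (ptilde n q z) = ∑ a ∈ Finset.range (n + 1), ∑ b ∈ Finset.range (n + 1),
      cq (((starRingEnd ℂ) (T1 (q a)) * T1 (q b) + T2 (q a) * (starRingEnd ℂ) (T2 (q b))) *
        z ^ (a + b)) := by
    rw [ptilde_double n q z, cq_sum]
    exact Finset.sum_congr rfl fun a _ => cq_sum
  rw [hptilde, ← Finset.sum_sub_distrib]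
  have hswap : ∀ a, (∑ b ∈ Finset.range (n+1), star (q a) * q b * (cq z) ^ (a + b)) -
      (∑ b ∈ Finset.range (n+1), cq (((starRingEnd ℂ) (T1 (q a)) * T1 (q b) +
        T2 (q a) * (starRingEnd ℂ) (T2 (q b))) * z ^ (a + b)))
      = ∑ b ∈ Finset.range (n+1), (star (q a) * q b * (cq z) ^ (a + b) -
        cq (((starRingEnd ℂ) (T1 (q a)) * T1 (q b) +
          T2 (q a) * (starRingEnd ℂ) (T2 (q b))) * z ^ (a + b))) := by
    intro a; rw [← Finset.sum_sub_distrib]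
  simp_rw [hswap]
  apply double_sum_antisym
  intro a b
  have hp := pair_id (q a) (q b) (z ^ (a + b))
  rw [← cq_pow, add_comm b a, ← cq_pow]
  rw [sub_add_sub_comm, hp, sub_self]

/-- Evaluation of the polynomial at a complex quaternion. -/
lemma P_cq (n : ℕ) (q : ℕ → Quaternion ℝ) (w : ℂ) :
    ∑ m ∈ Finset.range (n + 1), q m * (cq w) ^ m =
      cq (f1 n q w) + cq (f2 n q ((starRingEnd ℂ) w)) * qj := by
  have h : ∀ m, q m * (cq w) ^ m =
      cq ((⟨(q m).re, (q m).imI⟩ : ℂ) * w ^ m) +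
      cq ((⟨(q m).imJ, (q m).imK⟩ : ℂ) * ((starRingEnd ℂ) w) ^ m) * qj := by
    intro m
    rw [← cq_pow, mul_cq, ← map_pow]
    rfl
  simp_rw [h]
  rw [Finset.sum_add_distrib, f1, f2, cq_sum, ← Finset.sum_mul, cq_sum]

lemma cq_add_cq_qj_eq_zero {a b : ℂ} (h : cq a + cq b * qj = 0) : a = 0 ∧ b = 0 := by
  have h1 := congrArg QuaternionAlgebra.re h
  have h2 := congrArg QuaternionAlgebra.imI h
  have h3 := congrArg QuaternionAlgebra.imJ h
  have h4 := congrArg QuaternionAlgebra.imK h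
  simp [Quaternion.re_mul, Quaternion.imI_mul, Quaternion.imJ_mul,
    Quaternion.imK_mul] at h1 h2 h3 h4
  exact ⟨Complex.ext h1 h2, Complex.ext h3 h4⟩

open Polynomial in
lemma ptilde_roots_finite (n : ℕ) (q : ℕ → Quaternion ℝ) (hq : q n ≠ 0) :
    {z : ℂ | ptilde n q z = 0}.Finite := by
  set F1 : ℂ[X] := ∑ m ∈ Finset.range (n+1), C (T1 (q m)) * X ^ m with hF1
  set F1b : ℂ[X] := ∑ m ∈ Finset.range (n+1), C ((starRingEnd ℂ) (T1 (q m))) * X ^ m with hF1b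
  set F2 : ℂ[X] := ∑ m ∈ Finset.range (n+1), C (T2 (q m)) * X ^ m with hF2
  set F2b : ℂ[X] := ∑ m ∈ Finset.range (n+1), C ((starRingEnd ℂ) (T2 (q m))) * X ^ m with hF2b
  set Q : ℂ[X] := F1 * F1b + F2 * F2b with hQ
  have coeff_sum : ∀ (g : ℕ → ℂ) (k : ℕ),
      (∑ m ∈ Finset.range (n+1), C (g m) * X ^ m).coeff k = if k ≤ n then g k else 0 := by
    intro g k
    rw [Polynomial.finset_sum_coeff]
    simp_rw [Polynomial.coeff_C_mul, Polynomial.coeff_X_pow]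
    by_cases h : k ≤ n
    · rw [if_pos h, Finset.sum_eq_single k]
      · rw [if_pos rfl, mul_one]
      · intro m _ hm; rw [if_neg (Ne.symm hm)]; ring
      · intro hk; exact absurd (Finset.mem_range.mpr (by omega)) hk
    · rw [if_neg h]
      apply Finset.sum_eq_zero
      intro m hm
      rw [Finset.mem_range] at hm
      rw [if_neg (by omega)]; ring
  have hmulcoeff : ∀ (g h : ℕ → ℂ),
      ((∑ m ∈ Finset.range (n+1), C (g m) * X ^ m) *
        (∑ m ∈ Finset.range (n+1), C (h m) * X ^ m)).coeff (2*n) = g n * h n := by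
    intro g h
    rw [Polynomial.coeff_mul]
    rw [Finset.sum_eq_single (n, n)]
    · rw [coeff_sum g, coeff_sum h, if_pos le_rfl, if_pos le_rfl]
    · rintro ⟨a, b⟩ hab hne
      rw [Finset.HasAntidiagonal.mem_antidiagonal] at hab
      rcases Nat.lt_or_ge n a with h' | h'
      · rw [coeff_sum g, if_neg (by omega)]; ring
      · have : ¬ b ≤ n := by
          rcases Nat.lt_or_ge n b with h'' | h''
          · omega
          · exfalso; apply hne; have ha : a = n := by omega
            have hb : b = n := by omega
            simp [ha, hb]
        rw [coeff_sum h, if_neg this]; ring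
    · intro hmem
      exfalso; exact hmem (by simp [Finset.mem_antidiagonal]; omega)
  have hQcoeff : Q.coeff (2*n) = T1 (q n) * (starRingEnd ℂ) (T1 (q n)) +
      T2 (q n) * (starRingEnd ℂ) (T2 (q n)) := by
    rw [hQ, Polynomial.coeff_add, hmulcoeff, hmulcoeff]
  have hQne : Q ≠ 0 := by
    intro h
    rw [h] at hQcoeff
    simp only [Polynomial.coeff_zero] at hQcoeff
    rw [Complex.mul_conj, Complex.mul_conj] at hQcoeff
    have h1 : Complex.normSq (T1 (q n)) = 0 ∧ Complex.normSq (T2 (q n)) = 0 := by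
      have := congrArg Complex.re hQcoeff.symm
      simp at this
      constructor <;>
        nlinarith [Complex.normSq_nonneg (T1 (q n)), Complex.normSq_nonneg (T2 (q n))]
    apply hq
    have e1 := Complex.normSq_eq_zero.mp h1.1
    have e2 := Complex.normSq_eq_zero.mp h1.2
    have r1 := congrArg Complex.re e1
    have i1 := congrArg Complex.im e1
    have r2 := congrArg Complex.re e2
    have i2 := congrArg Complex.im e2
    simp [T1, T2] at r1 i1 r2 i2
    ext <;> simp [r1, i1, r2, i2]
  have heval : ∀ z : ℂ, Q.eval z = ptilde n q z := by
    intro z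
    rw [hQ, ptilde]
    simp only [Polynomial.eval_add, Polynomial.eval_mul, hF1, hF1b, hF2, hF2b,
      Polynomial.eval_finset_sum, Polynomial.eval_C, Polynomial.eval_X, Polynomial.eval_pow,
      Polynomial.eval_mul]
    rw [f1, f1b, f2, f2b]
    norm_num [T1, T2]
  have hset : {z : ℂ | ptilde n q z = 0} = {z : ℂ | Q.IsRoot z} := by
    ext z; simp [Polynomial.IsRoot, heval]
  rw [hset]
  exact Polynomial.finite_setOf_isRoot hQne

lemma sq3_eq_zero {a b c : ℝ} (h : a ^ 2 + b ^ 2 + c ^ 2 = 0) : a = 0 ∧ b = 0 ∧ c = 0 := by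
  refine ⟨?_, ?_, ?_⟩ <;> nlinarith [sq_nonneg a, sq_nonneg b, sq_nonneg c]

set_option maxHeartbeats 1000000 in
/-- A simple quaternionic polynomial (with `q n ≠ 0` and constant coefficient `0` or `1`)
has finitely many zeros iff there is no nonreal complex number `z` with
`f₁(z) = f₂(z) = 0` and `f₁(conj z) = f₂(conj z) = 0` (equivalently, iff
`gcd(f₁, f₂, f̄₁, f̄₂)` has no nonreal complex root). -/
theorem finitely_many_zeros_iff_no_common_nonreal_root
    (n : ℕ) (q : ℕ → Quaternion ℝ) (hq : q n ≠ 0) (h0 : q 0 = 0 ∨ q 0 = 1) :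
    {x : Quaternion ℝ | ∑ m ∈ Finset.range (n + 1), q m * x ^ m = 0}.Finite ↔
      ¬ ∃ z : ℂ, z.im ≠ 0 ∧ f1 n q z = 0 ∧ f2 n q z = 0 ∧
        f1 n q ((starRingEnd ℂ) z) = 0 ∧ f2 n q ((starRingEnd ℂ) z) = 0 := by
  classical
  constructor
  · -- finite → no common nonreal root
    intro hfin
    rintro ⟨z, hzim, hf1z, hf2z, hf1c, hf2c⟩
    set s : ℝ := 2 * z.re with hs
    set r : ℝ := z.re ^ 2 + z.im ^ 2 with hr
    have hsqz : (cq z) ^ 2 = s • cq z - algebraMap ℝ (Quaternion ℝ) r := cq_sq z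
    have hsqzc : (cq ((starRingEnd ℂ) z)) ^ 2 =
        s • cq ((starRingEnd ℂ) z) - algebraMap ℝ (Quaternion ℝ) r := by
      have h := cq_sq ((starRingEnd ℂ) z)
      simpa [Complex.conj_re, Complex.conj_im, hs, hr, neg_sq] using h
    set A := ∑ m ∈ Finset.range (n + 1), (ab s r m).1 • q m with hA
    set B := ∑ m ∈ Finset.range (n + 1), (ab s r m).2 • q m with hB
    have h1 : A + B * cq z = 0 := by
      rw [← P_eq n q s r (cq z) hsqz, P_cq, hf1z, hf2c, cq_zero]
      simp
    have h2 : A + B * cq ((starRingEnd ℂ) z) = 0 := by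
      rw [← P_eq n q s r _ hsqzc, P_cq, Complex.conj_conj, hf1c, hf2z, cq_zero]
      simp
    have hBz : B * (cq z - cq ((starRingEnd ℂ) z)) = 0 := by
      have e : A + B * cq z = A + B * cq ((starRingEnd ℂ) z) := by rw [h1, h2]
      have e2 := add_left_cancel e
      rw [mul_sub, e2, sub_self]
    have hd : cq z - cq ((starRingEnd ℂ) z) ≠ 0 := by
      intro h
      apply hzim
      have h2' := congrArg QuaternionAlgebra.imI h
      simp at h2'
      linarith
    have hB0 : B = 0 := by
      rcases mul_eq_zero.mp hBz with h | h
      · exact h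
      · exact absurd h hd
    have hA0 : A = 0 := by
      have h1' := h1
      rw [hB0, zero_mul, add_zero] at h1'
      exact h1'
    set φ : ℝ → Quaternion ℝ := fun u =>
      ⟨z.re, z.im * (1 - u ^ 2) / (1 + u ^ 2), 0, z.im * (2 * u) / (1 + u ^ 2)⟩ with hφ
    have hu2 : ∀ u : ℝ, (1 : ℝ) + u ^ 2 ≠ 0 := fun u => by positivity
    have hmem : ∀ u : ℝ,
        φ u ∈ {x : Quaternion ℝ | ∑ m ∈ Finset.range (n + 1), q m * x ^ m = 0} := by
      intro u
      have h2' : (φ u).re ^ 2 + (φ u).imI ^ 2 + (φ u).imJ ^ 2 + (φ u).imK ^ 2 = r := by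
        show z.re ^ 2 + (z.im * (1 - u ^ 2) / (1 + u ^ 2)) ^ 2 + 0 ^ 2 +
          (z.im * (2 * u) / (1 + u ^ 2)) ^ 2 = r
        rw [hr]
        field_simp
        ring
      have hsq : (φ u) ^ 2 = s • φ u - algebraMap ℝ (Quaternion ℝ) r := by
        rw [quat_sq (φ u), h2']
      show ∑ m ∈ Finset.range (n + 1), q m * (φ u) ^ m = 0
      rw [P_eq n q s r (φ u) hsq, ← hA, ← hB, hA0, hB0]
      simp
    have hinj : Function.Injective φ := by
      intro u v huv
      have e1 : z.im * (1 - u ^ 2) / (1 + u ^ 2) = z.im * (1 - v ^ 2) / (1 + v ^ 2) :=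
        congrArg QuaternionAlgebra.imI huv
      have e2 : z.im * (2 * u) / (1 + u ^ 2) = z.im * (2 * v) / (1 + v ^ 2) :=
        congrArg QuaternionAlgebra.imK huv
      rw [div_eq_div_iff (hu2 u) (hu2 v)] at e1 e2
      have g1 : (1 - u ^ 2) * (1 + v ^ 2) = (1 - v ^ 2) * (1 + u ^ 2) := by
        apply mul_left_cancel₀ hzim
        linear_combination e1
      have g2 : u * (1 + v ^ 2) = v * (1 + u ^ 2) := by
        have h2im : z.im * (2 * (u * (1 + v ^ 2))) = z.im * (2 * (v * (1 + u ^ 2))) := by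
          linear_combination e2
        have h2c := mul_left_cancel₀ hzim h2im
        linarith
      have hv2 : u ^ 2 = v ^ 2 := by nlinarith [g1]
      rw [hv2] at g2
      exact mul_right_cancel₀ (hu2 v) g2
    exact (Set.infinite_of_injective_forall_mem hinj hmem) hfin
  · -- no common nonreal root → finite
    intro hne
    have hkey : ∀ x : Quaternion ℝ,
        (∑ m ∈ Finset.range (n + 1), q m * x ^ m = 0) →
        ptilde n q ⟨x.re, Real.sqrt (x.imI ^ 2 + x.imJ ^ 2 + x.imK ^ 2)⟩ = 0 := by
      intro x hx
      set s : ℝ := 2 * x.re with hs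
      set r : ℝ := x.re ^ 2 + x.imI ^ 2 + x.imJ ^ 2 + x.imK ^ 2 with hr
      set b : ℝ := Real.sqrt (x.imI ^ 2 + x.imJ ^ 2 + x.imK ^ 2) with hb
      have hbnn : (0:ℝ) ≤ x.imI ^ 2 + x.imJ ^ 2 + x.imK ^ 2 := by positivity
      have hb2 : b ^ 2 = x.imI ^ 2 + x.imJ ^ 2 + x.imK ^ 2 := Real.sq_sqrt hbnn
      have hxsq : x ^ 2 = s • x - algebraMap ℝ (Quaternion ℝ) r := quat_sq x
      have hT0 : ∑ a ∈ Finset.range (n+1), ∑ b' ∈ Finset.range (n+1),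
          star (q a) * q b' * x ^ (a + b') = 0 := by
        rw [T_factor n q x, hx]
        simp
      rw [T_eq n q s r x hxsq] at hT0
      have hzre : (⟨x.re, b⟩ : ℂ).re ^ 2 + (⟨x.re, b⟩ : ℂ).im ^ 2 = r := by
        show x.re ^ 2 + b ^ 2 = r
        rw [hb2, hr]
        ring
      have hzsq : (cq ⟨x.re, b⟩) ^ 2 = s • cq ⟨x.re, b⟩ - algebraMap ℝ (Quaternion ℝ) r := by
        rw [cq_sq ⟨x.re, b⟩, hzre, hs]
      have hTz : (∑ a ∈ Finset.range (n+1), ∑ b' ∈ Finset.range (n+1),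
            (ab s r (a+b')).1 • (star (q a) * q b')) +
          (∑ a ∈ Finset.range (n+1), ∑ b' ∈ Finset.range (n+1),
            (ab s r (a+b')).2 • (star (q a) * q b')) * cq ⟨x.re, b⟩ =
          cq (ptilde n q ⟨x.re, b⟩) := by
        rw [← T_cq n q ⟨x.re, b⟩, T_eq n q s r (cq ⟨x.re, b⟩) hzsq]
      obtain ⟨u, hu⟩ : ∃ u : ℝ, (∑ a ∈ Finset.range (n+1), ∑ b' ∈ Finset.range (n+1),
          (ab s r (a+b')).1 • (star (q a) * q b')) = ((u : ℝ) : Quaternion ℝ) :=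
        ⟨_, real_of_star_eq _ (star_U n q (fun k => (ab s r k).1))⟩
      obtain ⟨v, hv⟩ : ∃ v : ℝ, (∑ a ∈ Finset.range (n+1), ∑ b' ∈ Finset.range (n+1),
          (ab s r (a+b')).2 • (star (q a) * q b')) = ((v : ℝ) : Quaternion ℝ) :=
        ⟨_, real_of_star_eq _ (star_U n q (fun k => (ab s r k).2))⟩
      rw [hu, hv] at hT0 hTz
      have hre := congrArg QuaternionAlgebra.re hT0
      have hi := congrArg QuaternionAlgebra.imI hT0
      have hj := congrArg QuaternionAlgebra.imJ hT0
      have hk := congrArg QuaternionAlgebra.imK hT0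
      simp [Quaternion.re_mul, Quaternion.imI_mul, Quaternion.imJ_mul, Quaternion.imK_mul]
        at hre hi hj hk
      have hpt : ptilde n q ⟨x.re, b⟩ = (u : ℂ) + (v : ℂ) * ⟨x.re, b⟩ := by
        refine (cq_inj ?_).symm
        rw [cq_add, cq_mul, cq_ofReal, cq_ofReal]
        exact hTz
      have hvb : v * b = 0 := by
        by_cases hb0 : b = 0
        · rw [hb0, mul_zero]
        · have hsumne : x.imI ^ 2 + x.imJ ^ 2 + x.imK ^ 2 ≠ 0 := by
            intro h
            apply hb0
            rw [hb, h, Real.sqrt_zero]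
          have hv0 : v = 0 := by
            by_contra hv'
            apply hsumne
            have i0 : x.imI = 0 := by
              rcases hi with h | h
              · exact absurd h hv'
              · exact h
            have j0 : x.imJ = 0 := by
              rcases hj with h | h
              · exact absurd h hv'
              · exact h
            have k0 : x.imK = 0 := by
              rcases hk with h | h
              · exact absurd h hv'
              · exact h
            rw [i0, j0, k0]
            ring
          rw [hv0, zero_mul]
      rw [hpt]
      apply Complex.ext
      · show (u + (v * x.re - 0 * b) : ℝ) = 0
        linarith [hre]
      · show (0 + (v * b + 0 * x.re) : ℝ) = 0
        linarith [hvb]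
    have hfib : ∀ z0 : ℂ, Set.Subsingleton {x : Quaternion ℝ |
        (∑ m ∈ Finset.range (n + 1), q m * x ^ m = 0) ∧ x.re = z0.re ∧
        Real.sqrt (x.imI ^ 2 + x.imJ ^ 2 + x.imK ^ 2) = z0.im} := by
      intro z0 x hx y hy
      obtain ⟨hxP, hxre, hxb⟩ := hx
      obtain ⟨hyP, hyre, hyb⟩ := hy
      have hxnn : (0:ℝ) ≤ x.imI ^ 2 + x.imJ ^ 2 + x.imK ^ 2 := by positivity
      have hynn : (0:ℝ) ≤ y.imI ^ 2 + y.imJ ^ 2 + y.imK ^ 2 := by positivity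
      have hSx : x.imI ^ 2 + x.imJ ^ 2 + x.imK ^ 2 = z0.im ^ 2 := by
        rw [← hxb, Real.sq_sqrt hxnn]
      have hSy : y.imI ^ 2 + y.imJ ^ 2 + y.imK ^ 2 = z0.im ^ 2 := by
        rw [← hyb, Real.sq_sqrt hynn]
      set s : ℝ := 2 * z0.re with hs
      set r : ℝ := z0.re ^ 2 + z0.im ^ 2 with hr
      have hxsq : x ^ 2 = s • x - algebraMap ℝ (Quaternion ℝ) r := by
        rw [quat_sq x]
        congr 1
        · rw [hxre, hs]
        · congr 1
          rw [hxre, hr]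
          linarith [hSx]
      have hysq : y ^ 2 = s • y - algebraMap ℝ (Quaternion ℝ) r := by
        rw [quat_sq y]
        congr 1
        · rw [hyre, hs]
        · congr 1
          rw [hyre, hr]
          linarith [hSy]
      have h1 : (∑ m ∈ Finset.range (n+1), (ab s r m).1 • q m) +
          (∑ m ∈ Finset.range (n+1), (ab s r m).2 • q m) * x = 0 := by
        rw [← P_eq n q s r x hxsq]
        exact hxP
      have h2 : (∑ m ∈ Finset.range (n+1), (ab s r m).1 • q m) +
          (∑ m ∈ Finset.range (n+1), (ab s r m).2 • q m) * y = 0 := by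
        rw [← P_eq n q s r y hysq]
        exact hyP
      have hBd : (∑ m ∈ Finset.range (n+1), (ab s r m).2 • q m) * (x - y) = 0 := by
        have e := add_left_cancel (h1.trans h2.symm)
        rw [mul_sub, e, sub_self]
      rcases mul_eq_zero.mp hBd with hB0 | hxy
      · have hA0 : (∑ m ∈ Finset.range (n+1), (ab s r m).1 • q m) = 0 := by
          rw [hB0, zero_mul, add_zero] at h1
          exact h1
        by_cases hb0 : z0.im = 0
        · rw [hb0] at hSx hSy
          have hx0 := sq3_eq_zero (by simpa using hSx)
          have hy0 := sq3_eq_zero (by simpa using hSy)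
          ext
          · rw [hxre, hyre]
          · rw [hx0.1, hy0.1]
          · rw [hx0.2.1, hy0.2.1]
          · rw [hx0.2.2, hy0.2.2]
        · exfalso
          apply hne
          have hz0sq : (cq z0) ^ 2 = s • cq z0 - algebraMap ℝ (Quaternion ℝ) r := by
            rw [cq_sq z0, hs, hr]
          have hz0csq : (cq ((starRingEnd ℂ) z0)) ^ 2 =
              s • cq ((starRingEnd ℂ) z0) - algebraMap ℝ (Quaternion ℝ) r := by
            have h := cq_sq ((starRingEnd ℂ) z0)
            simpa [Complex.conj_re, Complex.conj_im, neg_sq, hs, hr] using h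
          have e1 : cq (f1 n q z0) + cq (f2 n q ((starRingEnd ℂ) z0)) * qj = 0 := by
            rw [← P_cq n q z0, P_eq n q s r (cq z0) hz0sq, hA0, hB0]
            simp
          have e2 : cq (f1 n q ((starRingEnd ℂ) z0)) + cq (f2 n q z0) * qj = 0 := by
            have := P_cq n q ((starRingEnd ℂ) z0)
            rw [Complex.conj_conj] at this
            rw [← this, P_eq n q s r (cq ((starRingEnd ℂ) z0)) hz0csq, hA0, hB0]
            simp
          obtain ⟨hf1z0, hf2z0c⟩ := cq_add_cq_qj_eq_zero e1
          obtain ⟨hf1z0c, hf2z0⟩ := cq_add_cq_qj_eq_zero e2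
          exact ⟨z0, hb0, hf1z0, hf2z0, hf1z0c, hf2z0c⟩
      · exact sub_eq_zero.mp hxy
    apply Set.Finite.subset (Set.Finite.biUnion (ptilde_roots_finite n q hq)
      (fun z0 _ => Set.Subsingleton.finite (hfib z0)))
    intro x hx
    have hx' : ∑ m ∈ Finset.range (n+1), q m * x ^ m = 0 := hx
    exact Set.mem_biUnion (hkey x hx') ⟨hx', rfl, rfl⟩
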